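/- Let h : ℝ_{>0} → ℝ be C¹ with h' strictly increasing on an interval (0, B] and h'(A) = 1 for some A ∈ (0, B). Suppose F : (−∞, s₀] → (0, B] is C¹, satisfies the ODE F'(s) = −F(s)·(h'(F(s)) − 1) for all s ≤ s₀, and lim_{s→−∞} F(s) = A. Then F(s) = A for all s ≤ s₀. -/

import Mathlib

open Set Filter

/-- Key comparison lemma: if `G` has derivative `g` on `(-∞, s₀]`, `g < 0`
wherever `G > a`, and `G → a` at `-∞`, then `G ≤ a` on `(-∞, s₀]`. -/
lemma stmt5_key (s₀ s₁ a : ℝ) (hs : s₁ ≤ s₀) (G g : ℝ → ℝ)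
    (hG : ∀ s ≤ s₀, HasDerivAt G (g s) s)
    (hneg : ∀ s ≤ s₀, a < G s → g s < 0)
    (hlim : Tendsto G atBot (nhds a)) : ¬ a < G s₁ := by
  intro hcon
  -- Claim: G s₁ ≤ G s for all s ≤ s₁
  have claim : ∀ s ≤ s₁, G s₁ ≤ G s := by
    by_contra hc
    push_neg at hc
    obtain ⟨s₂, hs₂le, hs₂lt⟩ := hc
    set c : ℝ := (max a (G s₂) + G s₁) / 2 with hc_def
    have hmax : max a (G s₂) < G s₁ := max_lt hcon hs₂lt
    have hc1 : max a (G s₂) < c := by simp only [hc_def]; linarith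
    have hc2 : c < G s₁ := by simp only [hc_def]; linarith
    have hac : a < c := lt_of_le_of_lt (le_max_left _ _) hc1
    have hcont : ∀ x ∈ Icc s₂ s₁, ContinuousWithinAt G (Icc s₂ s₁) x := fun x hx =>
      ((hG x (hx.2.trans hs)).continuousAt).continuousWithinAt
    set Z : Set ℝ := Icc s₂ s₁ ∩ G ⁻¹' {c} with hZ_def
    have hZclosed : IsClosed Z :=
      ContinuousOn.preimage_isClosed_of_isClosed hcont isClosed_Icc isClosed_singleton
    have hZbdd : BddAbove Z := ⟨s₁, fun x hx => hx.1.2⟩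
    have hZne : Z.Nonempty := by
      have hmem : c ∈ Icc (G s₂) (G s₁) :=
        ⟨le_of_lt (lt_of_le_of_lt (le_max_right _ _) hc1), le_of_lt hc2⟩
      obtain ⟨t₀, ht₀mem, ht₀⟩ := intermediate_value_Icc hs₂le hcont hmem
      exact ⟨t₀, ht₀mem, ht₀⟩
    set t : ℝ := sSup Z with ht_def
    have htZ : t ∈ Z := hZclosed.csSup_mem hZne hZbdd
    have htc : G t = c := htZ.2
    have htlt : t < s₁ := lt_of_le_of_ne htZ.1.2 (by
      intro h; rw [h] at htc; exact absurd htc.symm (ne_of_lt hc2))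
    -- On (t, s₁], G > c
    have hup : ∀ u ∈ Ioc t s₁, c < G u := by
      intro u ⟨htu, hus₁⟩
      by_contra hle
      push_neg at hle
      rcases eq_or_lt_of_le hle with heq | hlt
      · have huZ : u ∈ Z := ⟨⟨htZ.1.1.trans (le_of_lt htu), hus₁⟩, heq⟩
        exact absurd (le_csSup hZbdd huZ) (not_le.mpr htu)
      · have hcont' : ∀ x ∈ Icc u s₁, ContinuousWithinAt G (Icc u s₁) x := fun x hx =>
          ((hG x (hx.2.trans hs)).continuousAt).continuousWithinAt
        have hmem : c ∈ Icc (G u) (G s₁) := ⟨le_of_lt hlt, le_of_lt hc2⟩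
        obtain ⟨v, hvmem, hv⟩ := intermediate_value_Icc hus₁ hcont' hmem
        have hvZ : v ∈ Z := ⟨⟨htZ.1.1.trans (le_of_lt (lt_of_lt_of_le htu hvmem.1)), hvmem.2⟩, hv⟩
        have : v ≤ t := le_csSup hZbdd hvZ
        exact absurd (lt_of_lt_of_le htu hvmem.1) (not_lt.mpr this)
    -- G strictly decreasing on [t, s₁]
    have hanti : StrictAntiOn G (Icc t s₁) := by
      apply strictAntiOn_of_deriv_neg (convex_Icc t s₁)
      · intro x hx
        exact ((hG x ((hx.2.trans hs))).continuousAt).continuousWithinAt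
      · intro x hx
        rw [interior_Icc] at hx
        have hxs₀ : x ≤ s₀ := (hx.2.le).trans hs
        rw [(hG x hxs₀).deriv]
        exact hneg x hxs₀ (lt_trans hac (hup x ⟨hx.1, hx.2.le⟩))
    have : G s₁ < G t :=
      hanti ⟨le_refl t, le_of_lt htlt⟩ ⟨le_of_lt htlt, le_refl s₁⟩ htlt
    rw [htc] at this
    linarith
  have hev : ∀ᶠ s in atBot, G s₁ ≤ G s :=
    (eventually_le_atBot s₁).mono fun s hs' => claim s hs'
  have := ge_of_tendsto hlim hev
  linarith

/-- uniqueness of the backward-asymptotic solution of the radial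
Floer ODE `F' = −F(h'(F) − 1)` with `F → A` as `s → −∞`: the solution is
constantly `A`. Here `h'` (denoted `h'`) is strictly increasing on `(0,B]`
with `h'(A) = 1`, `0 < A < B`, and `F` takes values in `(0,B]`. -/
theorem stmt5 (B A s₀ : ℝ) (hAB : 0 < A ∧ A < B)
    (h' : ℝ → ℝ) (hmono : StrictMonoOn h' (Set.Ioc (0:ℝ) B)) (hA : h' A = 1)
    (F : ℝ → ℝ)
    (hF : ∀ s ≤ s₀, HasDerivAt F (-(F s * (h' (F s) - 1))) s)
    (hrange : ∀ s ≤ s₀, F s ∈ Set.Ioc (0:ℝ) B)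
    (hlim : Filter.Tendsto F Filter.atBot (nhds A)) :
    ∀ s ≤ s₀, F s = A := by
  obtain ⟨hA0, hAB'⟩ := hAB
  have hAmem : A ∈ Set.Ioc (0:ℝ) B := ⟨hA0, le_of_lt hAB'⟩
  intro s hs
  -- upper bound: ¬ A < F s
  have hupper : ¬ A < F s := by
    apply stmt5_key s₀ s A hs F (fun u => -(F u * (h' (F u) - 1))) hF _ hlim
    intro u hu hAu
    have hmem := hrange u hu
    have h1 : (1:ℝ) < h' (F u) := by
      have := hmono hAmem hmem hAu
      rwa [hA] at this
    have h2 : 0 < F u * (h' (F u) - 1) := mul_pos hmem.1 (by linarith)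
    show -(F u * (h' (F u) - 1)) < 0
    linarith
  -- lower bound: ¬ F s < A, via G = -F
  have hlower : ¬ F s < A := by
    have key := stmt5_key s₀ s (-A) hs (fun u => -F u) (fun u => F u * (h' (F u) - 1))
      (fun u hu => by have h := (hF u hu).neg; rw [neg_neg] at h; exact h)
      (fun u hu hAu => by
        have hmem := hrange u hu
        have hFA : F u < A := by simpa using hAu
        have h1 : h' (F u) < 1 := by
          have := hmono hmem hAmem hFA
          rwa [hA] at this
        exact mul_neg_of_pos_of_neg hmem.1 (by linarith))
      (hlim.neg)
    intro hlt
    exact key (by simpa using hlt)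
  linarith [not_lt.mp hupper, not_lt.mp hlower]
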